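/- Every positively expansive continuous surjection of a compact metric space is bi-asymptotically c-expansive. -/
import Mathlib


open Filter Topology Function

/-- A full orbit (element of the inverse limit) of `f`. -/
def FullOrbit {X : Type*} (f : X → X) (x : ℤ → X) : Prop := ∀ n : ℤ, f (x n) = x (n + 1)

/-- `f` is bi-asymptotically `c`-expansive with constant `c`. -/
def BiAsympCExpWith {X : Type*} [MetricSpace X] (f : X → X) (c : ℝ) : Prop :=
  (∀ x y : ℤ → X, FullOrbit f x → FullOrbit f y →
      (∀ n : ℕ, dist (x n) (y n) ≤ c) →
      Tendsto (fun n : ℕ => dist (x n) (y n)) atTop (𝓝 0)) ∧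
  (∀ x y : ℤ → X, FullOrbit f x → FullOrbit f y →
      (∀ n : ℕ, dist (x (-(n : ℤ))) (y (-(n : ℤ))) ≤ c) →
      Tendsto (fun n : ℕ => dist (x (-(n : ℤ))) (y (-(n : ℤ)))) atTop (𝓝 0))

/-- `f` is bi-asymptotically `c`-expansive (for some constant). -/
def BiAsympCExpansive {X : Type*} [MetricSpace X] (f : X → X) : Prop :=
  ∃ c > 0, BiAsympCExpWith f c

/-- `f` has the shadowing property. -/
def Shadowing {X : Type*} [MetricSpace X] (f : X → X) : Prop :=
  ∀ ε > 0, ∃ δ > 0, ∀ x : ℕ → X, (∀ n : ℕ, dist (f (x n)) (x (n + 1)) ≤ δ) →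
    ∃ y : X, ∀ n : ℕ, dist (f^[n] y) (x n) ≤ ε

/-- `x` is a non-wandering point of `f`. -/
def NonWandering {X : Type*} [TopologicalSpace X] (f : X → X) (x : X) : Prop :=
  ∀ U : Set X, IsOpen U → x ∈ U → ∃ n : ℕ, 0 < n ∧ (f^[n] '' U ∩ U).Nonempty

/-- There is a finite `α`-chain from `x` to `y`. -/
def ChainRel {X : Type*} [MetricSpace X] (f : X → X) (α : ℝ) (x y : X) : Prop :=
  ∃ (n : ℕ) (z : ℕ → X), 0 < n ∧ z 0 = x ∧ z n = y ∧
    ∀ i < n, dist (f (z i)) (z (i + 1)) ≤ α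

/-- `x` is a chain recurrent point of `f`. -/
def ChainRecurrent {X : Type*} [MetricSpace X] (f : X → X) (x : X) : Prop :=
  ∀ α > 0, ChainRel f α x x

/-- chain equivalence of chain recurrent points -/
def ChainEquiv {X : Type*} [MetricSpace X] (f : X → X) (x y : X) : Prop :=
  ∀ α > 0, ChainRel f α x y ∧ ChainRel f α y x

/-- basic sets: chain equivalence classes of `CR(f)` -/
def IsBasicSet {X : Type*} [MetricSpace X] (f : X → X) (B : Set X) : Prop :=
  ∃ x : X, ChainRecurrent f x ∧ B = {y | ChainRecurrent f y ∧ ChainEquiv f x y}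

/-- the stable set of `x`. -/
def Ws {X : Type*} [MetricSpace X] (f : X → X) (x : X) : Set X :=
  {y | Tendsto (fun n : ℕ => dist (f^[n] x) (f^[n] y)) atTop (𝓝 0)}

/-- the unstable set of a full orbit `x`. -/
def Wu {X : Type*} [MetricSpace X] (f : X → X) (x : ℤ → X) : Set X :=
  {y₀ | ∃ y : ℤ → X, FullOrbit f y ∧ y 0 = y₀ ∧
    Tendsto (fun n : ℕ => dist (x (-(n : ℤ))) (y (-(n : ℤ)))) atTop (𝓝 0)}

/-- `g` restricted to `A` is topologically transitive. -/
def TopTransOn {X : Type*} [TopologicalSpace X] (g : X → X) (A : Set X) : Prop :=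
  ∀ U V : Set X, IsOpen U → IsOpen V → (U ∩ A).Nonempty → (V ∩ A).Nonempty →
    ∃ n : ℕ, 0 < n ∧ (g^[n] '' (U ∩ A) ∩ (V ∩ A)).Nonempty

/-- `g` restricted to `A` is topologically mixing. -/
def TopMixingOn {X : Type*} [TopologicalSpace X] (g : X → X) (A : Set X) : Prop :=
  ∀ U V : Set X, IsOpen U → IsOpen V → (U ∩ A).Nonempty → (V ∩ A).Nonempty →
    ∃ N : ℕ, ∀ n ≥ N, (g^[n] '' (U ∩ A) ∩ (V ∩ A)).Nonempty

/-- `g` is asymptotically expansive with constant `c`. -/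
def AsympExpWith {X : Type*} [MetricSpace X] (g : X → X) (c : ℝ) : Prop :=
  ∀ x y : X, (∀ n : ℕ, dist (g^[n] x) (g^[n] y) ≤ c) →
    Tendsto (fun n : ℕ => dist (g^[n] x) (g^[n] y)) atTop (𝓝 0)

lemma fullOrbit_iterate {X : Type*} (f : X → X) {x : ℤ → X} (hx : FullOrbit f x) :
    ∀ (k : ℕ) (m : ℤ), f^[k] (x m) = x (m + k) := by
  intro k
  induction k with
  | zero => intro m; simp
  | succ k ih =>
    intro m
    rw [Function.iterate_succ_apply', ih, hx]
    congr 1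
    push_cast
    ring

lemma uniform_exp {X : Type*} [MetricSpace X] [CompactSpace X]
    (f : X → X) (hf : Continuous f) (c : ℝ)
    (hexp : ∀ x y : X, (∀ n : ℕ, dist (f^[n] x) (f^[n] y) ≤ c) → x = y) :
    ∀ ε > 0, ∃ N : ℕ, ∀ x y : X,
      (∀ k ≤ N, dist (f^[k] x) (f^[k] y) ≤ c) → dist x y ≤ ε := by
  intro ε hε
  by_contra h
  push_neg at h
  choose u v h1 h2 using h
  have hw : ∀ n : ℕ, (u n, v n) ∈ (Set.univ : Set (X × X)) := fun n => Set.mem_univ _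
  obtain ⟨a, -, φ, hφ, hlim⟩ := IsCompact.tendsto_subseq isCompact_univ hw
  have hfst : Tendsto (fun n => u (φ n)) atTop (𝓝 a.1) :=
    (continuous_fst.tendsto a).comp hlim
  have hsnd : Tendsto (fun n => v (φ n)) atTop (𝓝 a.2) :=
    (continuous_snd.tendsto a).comp hlim
  have hab : a.1 = a.2 := by
    apply hexp
    intro k
    have hd : Tendsto (fun n => dist (f^[k] (u (φ n))) (f^[k] (v (φ n)))) atTop
        (𝓝 (dist (f^[k] a.1) (f^[k] a.2))) :=
      (((hf.iterate k).tendsto a.1).comp hfst).dist (((hf.iterate k).tendsto a.2).comp hsnd)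
    refine le_of_tendsto hd ?_
    filter_upwards [eventually_ge_atTop k] with n hn
    exact h1 (φ n) k (hn.trans (hφ.le_apply))
  have hd0 : Tendsto (fun n => dist (u (φ n)) (v (φ n))) atTop (𝓝 (dist a.1 a.2)) :=
    hfst.dist hsnd
  have : ε ≤ dist a.1 a.2 :=
    ge_of_tendsto hd0 (Eventually.of_forall fun n => (h2 (φ n)).le)
  rw [hab, dist_self] at this
  linarith

/-- Every positively expansive continuous surjection of a compact metric space is
bi-asymptotically `c`-expansive. -/
theorem biAsympCExpansive_of_posExpansive {X : Type*} [MetricSpace X] [CompactSpace X]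
    (f : X → X) (hf : Continuous f) (hsurj : Function.Surjective f)
    (c : ℝ) (hc : 0 < c)
    (hexp : ∀ x y : X, (∀ n : ℕ, dist (f^[n] x) (f^[n] y) ≤ c) → x = y) :
    BiAsympCExpansive f := by
  refine ⟨c, hc, ?_, ?_⟩
  · intro x y hx hy hle
    have h0 : x 0 = y 0 := by
      apply hexp
      intro n
      have hxn : f^[n] (x 0) = x n := by simpa using fullOrbit_iterate f hx n 0
      have hyn : f^[n] (y 0) = y n := by simpa using fullOrbit_iterate f hy n 0
      rw [hxn, hyn]; exact hle n
    have heq : ∀ n : ℕ, dist (x (n : ℤ)) (y (n : ℤ)) = 0 := by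
      intro n
      have hxn : f^[n] (x 0) = x n := by simpa using fullOrbit_iterate f hx n 0
      have hyn : f^[n] (y 0) = y n := by simpa using fullOrbit_iterate f hy n 0
      rw [← hxn, ← hyn, h0, dist_self]
    simpa [heq] using (tendsto_const_nhds : Tendsto (fun _ : ℕ => (0:ℝ)) atTop (𝓝 0))
  · intro x y hx hy hle
    rw [Metric.tendsto_atTop]
    intro ε hε
    obtain ⟨N, hN⟩ := uniform_exp f hf c hexp (ε/2) (by positivity)
    refine ⟨N, fun n hn => ?_⟩
    have key : dist (x (-(n : ℤ))) (y (-(n : ℤ))) ≤ ε/2 := by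
      apply hN
      intro k hk
      rw [fullOrbit_iterate f hx k _, fullOrbit_iterate f hy k _]
      have hkn : k ≤ n := hk.trans hn
      have : -(n : ℤ) + k = -((n - k : ℕ) : ℤ) := by
        push_cast [Nat.cast_sub hkn]
        ring
      rw [this]
      exact hle _
    rw [Real.dist_eq, sub_zero, abs_of_nonneg dist_nonneg]
    linarith
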